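/- For K > 0, let R₃(K) be the smallest root in (0,1) of X⁵ − 5X⁴ + 11X³ + X² + 16X = (1−X)⁵/K, and let R₂(K) be the smallest root in (0,1) of X³ − 3X² + 4X = (1−X)³/K. Then R₃ is a strictly decreasing function of K on (0,∞), with lim_{K→0⁺} R₃(K) = 1 and lim_{K→+∞} R₃(K) = 0, and R₃(K) ≤ R₂(K) for every K > 0. -/
import Mathlib


open Complex Filter Topology

noncomputable section

/-- `x` satisfies the quintic equation `X⁵ − 5X⁴ + 11X³ + X² + 16X = (1−X)⁵/K`. -/
def QuinticEq (K x : ℝ) : Prop :=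
  x ^ 5 - 5 * x ^ 4 + 11 * x ^ 3 + x ^ 2 + 16 * x = (1 - x) ^ 5 / K

/-- `x` satisfies the cubic equation `X³ − 3X² + 4X = (1−X)³/K`. -/
def CubicEq (K x : ℝ) : Prop :=
  x ^ 3 - 3 * x ^ 2 + 4 * x = (1 - x) ^ 3 / K

lemma P_pos {x : ℝ} (h0 : 0 < x) :
    0 < x ^ 5 - 5 * x ^ 4 + 11 * x ^ 3 + x ^ 2 + 16 * x := by
  nlinarith [pow_pos h0 3, pow_pos h0 5, sq_nonneg x, mul_pos h0 h0,
    mul_pos (mul_pos h0 h0) (mul_pos h0 h0)]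

lemma Q_pos {x : ℝ} (h0 : 0 < x) :
    0 < x ^ 3 - 3 * x ^ 2 + 4 * x := by
  nlinarith [sq_nonneg (x - 3/2), mul_pos h0 h0]

lemma P_mono {x y : ℝ} (h0 : 0 < x) (hxy : x ≤ y) (h1 : y < 1) :
    x ^ 5 - 5 * x ^ 4 + 11 * x ^ 3 + x ^ 2 + 16 * x ≤
    y ^ 5 - 5 * y ^ 4 + 11 * y ^ 3 + y ^ 2 + 16 * y := by
  nlinarith [mul_nonneg (sub_nonneg.2 hxy) (sq_nonneg (x + y)),
    mul_nonneg (sub_nonneg.2 hxy) (sq_nonneg (x - y)),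
    mul_nonneg (mul_nonneg (sub_nonneg.2 hxy) h0.le) (sub_nonneg.2 hxy),
    mul_pos h0 (h0.trans_le hxy), sq_nonneg (x*y - 1), sq_nonneg (x + y - 1),
    mul_nonneg (sub_nonneg.2 hxy) (mul_nonneg h0.le (h0.trans_le hxy).le)]

lemma quintic_mul {K x : ℝ} (hK : 0 < K) (h : QuinticEq K x) :
    K * (x ^ 5 - 5 * x ^ 4 + 11 * x ^ 3 + x ^ 2 + 16 * x) = (1 - x) ^ 5 := by
  rw [QuinticEq] at h
  field_simp at h
  linarith

lemma cubic_mul {K x : ℝ} (hK : 0 < K) (h : CubicEq K x) :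
    K * (x ^ 3 - 3 * x ^ 2 + 4 * x) = (1 - x) ^ 3 := by
  rw [CubicEq] at h
  field_simp at h
  linarith

/-- A root (in `(0,1)`) for a smaller `K` is larger. -/
lemma key {K₁ K₂ x y : ℝ} (hK₁ : 0 < K₁) (hK₂ : 0 < K₂)
    (hx : x ∈ Set.Ioo (0:ℝ) 1) (hy : y ∈ Set.Ioo (0:ℝ) 1)
    (h1 : QuinticEq K₁ x) (h2 : QuinticEq K₂ y) (hlt : K₁ < K₂) : y < x := by
  by_contra hc
  push_neg at hc
  have e1 := quintic_mul hK₁ h1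
  have e2 := quintic_mul hK₂ h2
  have hPy := P_pos hy.1
  have hPm := P_mono hx.1 hc hy.2
  have hpow : (1 - y) ^ 5 ≤ (1 - x) ^ 5 :=
    pow_le_pow_left₀ (by linarith [hy.2]) (by linarith) 5
  nlinarith [mul_le_mul_of_nonneg_left hPm hK₁.le, mul_lt_mul_of_pos_right hlt hPy]

/-- Each point of `(0,1)` is the root for the corresponding `K`. -/
lemma quintic_of_point {x : ℝ} (hx : x ∈ Set.Ioo (0:ℝ) 1) :
    0 < (1 - x) ^ 5 / (x ^ 5 - 5 * x ^ 4 + 11 * x ^ 3 + x ^ 2 + 16 * x) ∧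
    QuinticEq ((1 - x) ^ 5 / (x ^ 5 - 5 * x ^ 4 + 11 * x ^ 3 + x ^ 2 + 16 * x)) x := by
  have hP := P_pos hx.1
  have h1 : (0:ℝ) < (1 - x) ^ 5 := pow_pos (by linarith [hx.2]) 5
  refine ⟨div_pos h1 hP, ?_⟩
  rw [QuinticEq, eq_div_iff (div_pos h1 hP).ne', mul_div_cancel₀ _ hP.ne']

/-- **Remark (properties of the radii `R₂`, `R₃`).** If, for every `K > 0`, `R₃ K` is the
smallest root in `(0,1)` of the quintic and `R₂ K` the smallest root in `(0,1)` of the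
cubic, then `R₃` is strictly decreasing on `(0, ∞)`, `R₃(K) → 1` as `K → 0⁺`,
`R₃(K) → 0` as `K → ∞`, and `R₃(K) ≤ R₂(K)` for all `K > 0`. -/
theorem stmt9 (R₃ R₂ : ℝ → ℝ)
    (hR₃ : ∀ K : ℝ, 0 < K → R₃ K ∈ Set.Ioo (0 : ℝ) 1 ∧ QuinticEq K (R₃ K) ∧
      ∀ x ∈ Set.Ioo (0 : ℝ) 1, QuinticEq K x → R₃ K ≤ x)
    (hR₂ : ∀ K : ℝ, 0 < K → R₂ K ∈ Set.Ioo (0 : ℝ) 1 ∧ CubicEq K (R₂ K) ∧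
      ∀ x ∈ Set.Ioo (0 : ℝ) 1, CubicEq K x → R₂ K ≤ x) :
    StrictAntiOn R₃ (Set.Ioi 0) ∧
    Filter.Tendsto R₃ (nhdsWithin 0 (Set.Ioi 0)) (nhds 1) ∧
    Filter.Tendsto R₃ Filter.atTop (nhds 0) ∧
    ∀ K : ℝ, 0 < K → R₃ K ≤ R₂ K := by
  refine ⟨?_, ?_, ?_, ?_⟩
  · intro K₁ h₁ K₂ h₂ hlt
    exact key h₁ h₂ (hR₃ K₁ h₁).1 (hR₃ K₂ h₂).1 (hR₃ K₁ h₁).2.1 (hR₃ K₂ h₂).2.1 hlt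
  · rw [tendsto_order]
    constructor
    · intro a ha
      set x0 : ℝ := (max a 0 + 1) / 2 with hx0def
      have hx0 : x0 ∈ Set.Ioo (0:ℝ) 1 := by
        constructor
        · have := le_max_right a 0; simp only [hx0def]; linarith
        · have : max a 0 < 1 := max_lt ha one_pos
          simp only [hx0def]; linarith
      have hax0 : a < x0 := by
        have h1 := le_max_left a 0
        have h2 : max a 0 < 1 := max_lt ha one_pos
        simp only [hx0def]; linarith
      obtain ⟨hK0, hq⟩ := quintic_of_point hx0
      filter_upwards [Ioo_mem_nhdsGT_of_mem (Set.mem_Ico.2 ⟨le_refl 0, hK0⟩)] with K hK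
      have := key hK.1 hK0 (hR₃ K hK.1).1 hx0 (hR₃ K hK.1).2.1 hq hK.2
      linarith
    · intro a ha
      filter_upwards [self_mem_nhdsWithin] with K hK
      exact lt_trans (hR₃ K hK).1.2 ha
  · rw [tendsto_order]
    constructor
    · intro a ha
      filter_upwards [eventually_gt_atTop 0] with K hK
      exact lt_trans ha (hR₃ K hK).1.1
    · intro a ha
      set x0 : ℝ := min a 1 / 2 with hx0def
      have hx0 : x0 ∈ Set.Ioo (0:ℝ) 1 := by
        constructor
        · have : 0 < min a 1 := lt_min ha one_pos
          simp only [hx0def]; linarith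
        · have : min a 1 ≤ 1 := min_le_right a 1
          simp only [hx0def]; linarith
      have hx0a : x0 < a := by
        have h1 : min a 1 ≤ a := min_le_left a 1
        have h2 : 0 < min a 1 := lt_min ha one_pos
        simp only [hx0def]; linarith
      obtain ⟨hK0, hq⟩ := quintic_of_point hx0
      filter_upwards [eventually_gt_atTop ((1 - x0) ^ 5 / (x0 ^ 5 - 5 * x0 ^ 4 + 11 * x0 ^ 3 + x0 ^ 2 + 16 * x0))] with K hK
      have hKpos : 0 < K := hK0.trans hK
      have := key hK0 hKpos hx0 (hR₃ K hKpos).1 hq (hR₃ K hKpos).2.1 hK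
      linarith
  · intro K hK
    by_contra hc
    push_neg at hc
    obtain ⟨hr3, hq3, _⟩ := hR₃ K hK
    obtain ⟨hr2, hq2, _⟩ := hR₂ K hK
    have e3 := quintic_mul hK hq3
    have e2 := cubic_mul hK hq2
    have hQ := Q_pos hr2.1
    have hPm := P_mono hr2.1 hc.le hr3.2
    have hpow : (1 - R₃ K) ^ 5 < (1 - R₂ K) ^ 5 :=
      pow_lt_pow_left₀ (by linarith [hr3.2]) (by linarith [hr3.2]) (by norm_num)
    have e2' : (1 - R₂ K) ^ 2 * (K * (R₂ K ^ 3 - 3 * R₂ K ^ 2 + 4 * R₂ K)) = (1 - R₂ K) ^ 5 := by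
      rw [e2]; ring
    nlinarith [mul_le_mul_of_nonneg_left hPm hK.le, mul_pos hK hr2.1,
      mul_pos hK (mul_pos hr2.1 hr2.1)]
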